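/- For all real numbers a₁, a₂, a₃, the 3-form φ = −3a₁·(e^{146}+e^{157}) − 3a₂·(e^{147}−e^{156}) + a₁·e^{245} − a₁·e^{267} + a₃·(e^{247}−e^{256}) + a₃·(e^{346}+e^{357}) − a₂·e^{345} + a₂·e^{367} on ℝ⁷ is not definite, i.e., there exists a nonzero v ∈ ℝ⁷ with (ι_vφ)∧(ι_vφ)∧φ = 0. -/

import Mathlib

open AlternatingMap

/-- `ℝ⁷`. -/
abbrev V7 : Type := Fin 7 → ℝ

/-- Wedge product of real-valued alternating forms on `V7`. -/
noncomputable def wedge {m n : ℕ} (φ : V7 [⋀^Fin m]→ₗ[ℝ] ℝ) (ψ : V7 [⋀^Fin n]→ₗ[ℝ] ℝ) :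
    V7 [⋀^Fin (m + n)]→ₗ[ℝ] ℝ :=
  ((TensorProduct.lid ℝ ℝ).toLinearMap.compAlternatingMap (φ.domCoprod ψ)).domDomCongr
    finSumFinEquiv

open Fin.NatCast in
/-- The dual basis covector `eⁱ` (1-indexed: `i = 1, …, 7`) as a 1-form on `ℝ⁷`. -/
noncomputable def eF (i : ℕ) : V7 [⋀^Fin 1]→ₗ[ℝ] ℝ :=
  AlternatingMap.ofSubsingleton ℝ V7 ℝ (0 : Fin 1) (LinearMap.proj ((i - 1 : ℕ) : Fin 7))

/-- `e^{ij} := eⁱ ∧ eʲ` (1-indexed). -/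
noncomputable def eW2 (i j : ℕ) : V7 [⋀^Fin 2]→ₗ[ℝ] ℝ := wedge (eF i) (eF j)

/-- `e^{ijk} := eⁱ ∧ eʲ ∧ eᵏ` (1-indexed). -/
noncomputable def eW3 (i j k : ℕ) : V7 [⋀^Fin 3]→ₗ[ℝ] ℝ := wedge (wedge (eF i) (eF j)) (eF k)

/-- The volume form `e^{1234567} = e¹∧e²∧e³∧e⁴∧e⁵∧e⁶∧e⁷`. -/
noncomputable def vol7 : V7 [⋀^Fin 7]→ₗ[ℝ] ℝ :=
  wedge (wedge (wedge (wedge (wedge (wedge (eF 1) (eF 2)) (eF 3)) (eF 4)) (eF 5)) (eF 6)) (eF 7)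

open Fin.NatCast in
/-- The standard basis vector `eᵢ` of `ℝ⁷` (1-indexed: `i = 1, …, 7`). -/
noncomputable def bV (i : ℕ) : V7 := Pi.single ((i - 1 : ℕ) : Fin 7) 1

/-- Interior product `ι_v φ` of a vector with a 3-form: `(x, y) ↦ φ (v, x, y)`. -/
noncomputable def iprod (v : V7) (φ : V7 [⋀^Fin 3]→ₗ[ℝ] ℝ) : V7 [⋀^Fin 2]→ₗ[ℝ] ℝ :=
  φ.curryLeft v

/-- The 7-form `(ι_v φ) ∧ (ι_v φ) ∧ φ`. -/
noncomputable def G2vol (v : V7) (φ : V7 [⋀^Fin 3]→ₗ[ℝ] ℝ) : V7 [⋀^Fin 7]→ₗ[ℝ] ℝ :=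
  wedge (wedge (iprod v φ) (iprod v φ)) φ

/-- A 3-form on `ℝ⁷` is definite if `(ι_vφ)∧(ι_vφ)∧φ ≠ 0` for every nonzero `v`. -/
def IsDefinite (φ : V7 [⋀^Fin 3]→ₗ[ℝ] ℝ) : Prop :=
  ∀ v : V7, v ≠ 0 → G2vol v φ ≠ 0


section Helpers
open Equiv

lemma wedge_zero_left {m n : ℕ} (ψ : V7 [⋀^Fin n]→ₗ[ℝ] ℝ) :
    wedge (0 : V7 [⋀^Fin m]→ₗ[ℝ] ℝ) ψ = 0 := by
  unfold wedge
  rw [show (0 : V7 [⋀^Fin m]→ₗ[ℝ] ℝ).domCoprod ψ = 0 from by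
      rw [← AlternatingMap.domCoprod'_apply, TensorProduct.zero_tmul, _root_.map_zero]]
  ext x
  simp

lemma wedge_zero_right {m n : ℕ} (φ : V7 [⋀^Fin m]→ₗ[ℝ] ℝ) :
    wedge φ (0 : V7 [⋀^Fin n]→ₗ[ℝ] ℝ) = 0 := by
  unfold wedge
  rw [show φ.domCoprod (0 : V7 [⋀^Fin n]→ₗ[ℝ] ℝ) = 0 from by
      rw [← AlternatingMap.domCoprod'_apply, TensorProduct.tmul_zero, _root_.map_zero]]
  ext x
  simp

set_option synthInstance.maxHeartbeats 1000000 in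
lemma wedge_apply {m n : ℕ} (φ : V7 [⋀^Fin m]→ₗ[ℝ] ℝ) (ψ : V7 [⋀^Fin n]→ₗ[ℝ] ℝ)
    (x : Fin (m + n) → V7) :
    ((m.factorial * n.factorial : ℕ) : ℝ) * wedge φ ψ x =
      ∑ σ : Equiv.Perm (Fin m ⊕ Fin n), ((Equiv.Perm.sign σ : ℤ) : ℝ) *
        (φ (fun i => x (finSumFinEquiv (σ (Sum.inl i)))) *
         ψ (fun i => x (finSumFinEquiv (σ (Sum.inr i))))) := by
  set y : Fin m ⊕ Fin n → V7 := fun i => x (finSumFinEquiv i) with hy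
  have h := MultilinearMap.domCoprod_alternization_eq (R' := ℝ) (Mᵢ := V7) (N₁ := ℝ) (N₂ := ℝ) φ ψ
  have h3 : MultilinearMap.alternatization ((↑φ : MultilinearMap ℝ (fun _ : Fin m => V7) ℝ).domCoprod ↑ψ) y
      = (m.factorial * n.factorial) • (φ.domCoprod ψ) y := by
    rw [h]; simp
  have hL : wedge φ ψ x = TensorProduct.lid ℝ ℝ ((φ.domCoprod ψ) y) := rfl
  rw [← Nat.cast_smul_eq_nsmul ℝ] at h3
  have h4 := congrArg (TensorProduct.lid ℝ ℝ) h3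
  rw [map_smul] at h4
  rw [hL, ← smul_eq_mul, ← h4, MultilinearMap.alternatization_apply, map_sum]
  congr 1
  ext σ
  rw [MultilinearMap.domDomCongr_apply, MultilinearMap.domCoprod_apply, Units.smul_def,
    ← Int.cast_smul_eq_zsmul ℝ, map_smul, TensorProduct.lid_tmul, smul_eq_mul, smul_eq_mul]
  rfl

open Fin.NatCast in
lemma eF_apply (i : ℕ) (y : Fin 1 → V7) : eF i y = y 0 ((i - 1 : ℕ) : Fin 7) := rfl

open Fin.NatCast in
lemma eW2_apply (i j : ℕ) (x : Fin 2 → V7) :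
    eW2 i j x = x 0 ((i - 1 : ℕ) : Fin 7) * x 1 ((j - 1 : ℕ) : Fin 7)
      - x 1 ((i - 1 : ℕ) : Fin 7) * x 0 ((j - 1 : ℕ) : Fin 7) := by
  have h := wedge_apply (eF i) (eF j) x
  norm_num at h
  rw [eW2, h]
  rw [show (Finset.univ : Finset (Equiv.Perm (Fin 1 ⊕ Fin 1))) =
      {1, Equiv.swap (Sum.inl 0) (Sum.inr 0)} from by decide]
  rw [Finset.sum_insert (by decide), Finset.sum_singleton]
  simp only [eF_apply]
  rw [show finSumFinEquiv ((1 : Equiv.Perm (Fin 1 ⊕ Fin 1)) (Sum.inl 0)) = 0 from by decide,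
    show finSumFinEquiv ((1 : Equiv.Perm (Fin 1 ⊕ Fin 1)) (Sum.inr 0)) = 1 from by decide,
    show finSumFinEquiv ((Equiv.swap (Sum.inl 0) (Sum.inr 0) : Equiv.Perm (Fin 1 ⊕ Fin 1)) (Sum.inl 0)) = 1 from by decide,
    show finSumFinEquiv ((Equiv.swap (Sum.inl 0) (Sum.inr 0) : Equiv.Perm (Fin 1 ⊕ Fin 1)) (Sum.inr 0)) = 0 from by decide,
    show (Equiv.Perm.sign (1 : Equiv.Perm (Fin 1 ⊕ Fin 1)) : ℤ) = 1 from by decide,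
    show (Equiv.Perm.sign (Equiv.swap (Sum.inl (0:Fin 1)) (Sum.inr (0:Fin 1))) : ℤ) = -1 from by decide]
  push_cast
  ring

open Fin.NatCast in
lemma eW3_apply (i j k : ℕ) (x : Fin 3 → V7) :
    eW3 i j k x =
        x 0 ((i - 1 : ℕ) : Fin 7) * (x 1 ((j - 1 : ℕ) : Fin 7) * x 2 ((k - 1 : ℕ) : Fin 7)
          - x 2 ((j - 1 : ℕ) : Fin 7) * x 1 ((k - 1 : ℕ) : Fin 7))
      - x 1 ((i - 1 : ℕ) : Fin 7) * (x 0 ((j - 1 : ℕ) : Fin 7) * x 2 ((k - 1 : ℕ) : Fin 7)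
          - x 2 ((j - 1 : ℕ) : Fin 7) * x 0 ((k - 1 : ℕ) : Fin 7))
      + x 2 ((i - 1 : ℕ) : Fin 7) * (x 0 ((j - 1 : ℕ) : Fin 7) * x 1 ((k - 1 : ℕ) : Fin 7)
          - x 1 ((j - 1 : ℕ) : Fin 7) * x 0 ((k - 1 : ℕ) : Fin 7)) := by
  have h := wedge_apply (wedge (eF i) (eF j)) (eF k) x
  rw [show (Finset.univ : Finset (Equiv.Perm (Fin 2 ⊕ Fin 1))) = {(1 : Equiv.Perm (Fin 2 ⊕ Fin 1)), (Equiv.swap (Sum.inl 0) (Sum.inl 1) : Equiv.Perm (Fin 2 ⊕ Fin 1)), (Equiv.swap (Sum.inl 0) (Sum.inr 0) : Equiv.Perm (Fin 2 ⊕ Fin 1)), (Equiv.swap (Sum.inl 1) (Sum.inr 0) : Equiv.Perm (Fin 2 ⊕ Fin 1)), (Equiv.swap (Sum.inl 0) (Sum.inl 1) * Equiv.swap (Sum.inl 1) (Sum.inr 0) : Equiv.Perm (Fin 2 ⊕ Fin 1)), (Equiv.swap (Sum.inl 1) (Sum.inr 0) * Equiv.swap (Sum.inl 0) (Sum.inl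 1) : Equiv.Perm (Fin 2 ⊕ Fin 1))} from by decide] at h
  rw [Finset.sum_insert (by decide), Finset.sum_insert (by decide), Finset.sum_insert (by decide),
    Finset.sum_insert (by decide), Finset.sum_insert (by decide), Finset.sum_singleton] at h
  have h2 : ∀ y : Fin 2 → V7, eW2 i j y = wedge (eF i) (eF j) y := fun _ => rfl
  rw [← h2, ← h2, ← h2, ← h2, ← h2, ← h2] at h
  simp only [eW2_apply, eF_apply] at h
  simp only [show finSumFinEquiv ((1 : Equiv.Perm (Fin 2 ⊕ Fin 1)) (Sum.inl 0)) = 0 from by decide,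
    show finSumFinEquiv ((1 : Equiv.Perm (Fin 2 ⊕ Fin 1)) (Sum.inl 1)) = 1 from by decide,
    show finSumFinEquiv ((1 : Equiv.Perm (Fin 2 ⊕ Fin 1)) (Sum.inr 0)) = 2 from by decide,
    show (Equiv.Perm.sign (1 : Equiv.Perm (Fin 2 ⊕ Fin 1)) : ℤ) = 1 from by decide,
    show finSumFinEquiv ((Equiv.swap (Sum.inl 0) (Sum.inl 1) : Equiv.Perm (Fin 2 ⊕ Fin 1)) (Sum.inl 0)) = 1 from by decide,
    show finSumFinEquiv ((Equiv.swap (Sum.inl 0) (Sum.inl 1) : Equiv.Perm (Fin 2 ⊕ Fin 1)) (Sum.inl 1)) = 0 from by decide,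
    show finSumFinEquiv ((Equiv.swap (Sum.inl 0) (Sum.inl 1) : Equiv.Perm (Fin 2 ⊕ Fin 1)) (Sum.inr 0)) = 2 from by decide,
    show (Equiv.Perm.sign (Equiv.swap (Sum.inl 0) (Sum.inl 1) : Equiv.Perm (Fin 2 ⊕ Fin 1)) : ℤ) = -1 from by decide,
    show finSumFinEquiv ((Equiv.swap (Sum.inl 0) (Sum.inr 0) : Equiv.Perm (Fin 2 ⊕ Fin 1)) (Sum.inl 0)) = 2 from by decide,
    show finSumFinEquiv ((Equiv.swap (Sum.inl 0) (Sum.inr 0) : Equiv.Perm (Fin 2 ⊕ Fin 1)) (Sum.inl 1)) = 1 from by decide,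
    show finSumFinEquiv ((Equiv.swap (Sum.inl 0) (Sum.inr 0) : Equiv.Perm (Fin 2 ⊕ Fin 1)) (Sum.inr 0)) = 0 from by decide,
    show (Equiv.Perm.sign (Equiv.swap (Sum.inl 0) (Sum.inr 0) : Equiv.Perm (Fin 2 ⊕ Fin 1)) : ℤ) = -1 from by decide,
    show finSumFinEquiv ((Equiv.swap (Sum.inl 1) (Sum.inr 0) : Equiv.Perm (Fin 2 ⊕ Fin 1)) (Sum.inl 0)) = 0 from by decide,
    show finSumFinEquiv ((Equiv.swap (Sum.inl 1) (Sum.inr 0) : Equiv.Perm (Fin 2 ⊕ Fin 1)) (Sum.inl 1)) = 2 from by decide,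
    show finSumFinEquiv ((Equiv.swap (Sum.inl 1) (Sum.inr 0) : Equiv.Perm (Fin 2 ⊕ Fin 1)) (Sum.inr 0)) = 1 from by decide,
    show (Equiv.Perm.sign (Equiv.swap (Sum.inl 1) (Sum.inr 0) : Equiv.Perm (Fin 2 ⊕ Fin 1)) : ℤ) = -1 from by decide,
    show finSumFinEquiv ((Equiv.swap (Sum.inl 0) (Sum.inl 1) * Equiv.swap (Sum.inl 1) (Sum.inr 0) : Equiv.Perm (Fin 2 ⊕ Fin 1)) (Sum.inl 0)) = 1 from by decide,
    show finSumFinEquiv ((Equiv.swap (Sum.inl 0) (Sum.inl 1) * Equiv.swap (Sum.inl 1) (Sum.inr 0) : Equiv.Perm (Fin 2 ⊕ Fin 1)) (Sum.inl 1)) = 2 from by decide,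
    show finSumFinEquiv ((Equiv.swap (Sum.inl 0) (Sum.inl 1) * Equiv.swap (Sum.inl 1) (Sum.inr 0) : Equiv.Perm (Fin 2 ⊕ Fin 1)) (Sum.inr 0)) = 0 from by decide,
    show (Equiv.Perm.sign (Equiv.swap (Sum.inl 0) (Sum.inl 1) * Equiv.swap (Sum.inl 1) (Sum.inr 0) : Equiv.Perm (Fin 2 ⊕ Fin 1)) : ℤ) = 1 from by decide,
    show finSumFinEquiv ((Equiv.swap (Sum.inl 1) (Sum.inr 0) * Equiv.swap (Sum.inl 0) (Sum.inl 1) : Equiv.Perm (Fin 2 ⊕ Fin 1)) (Sum.inl 0)) = 2 from by decide,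
    show finSumFinEquiv ((Equiv.swap (Sum.inl 1) (Sum.inr 0) * Equiv.swap (Sum.inl 0) (Sum.inl 1) : Equiv.Perm (Fin 2 ⊕ Fin 1)) (Sum.inl 1)) = 0 from by decide,
    show finSumFinEquiv ((Equiv.swap (Sum.inl 1) (Sum.inr 0) * Equiv.swap (Sum.inl 0) (Sum.inl 1) : Equiv.Perm (Fin 2 ⊕ Fin 1)) (Sum.inr 0)) = 1 from by decide,
    show (Equiv.Perm.sign (Equiv.swap (Sum.inl 1) (Sum.inr 0) * Equiv.swap (Sum.inl 0) (Sum.inl 1) : Equiv.Perm (Fin 2 ⊕ Fin 1)) : ℤ) = 1 from by decide] at h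
  norm_num at h
  rw [show eW3 i j k x = wedge (wedge (eF i) (eF j)) (eF k) x from rfl]
  linarith [h]

end Helpers

/-- The 3-form
`φ = −3a₁(e^{146}+e^{157}) − 3a₂(e^{147}−e^{156}) + a₁e^{245} − a₁e^{267}
  + a₃(e^{247}−e^{256}) + a₃(e^{346}+e^{357}) − a₂e^{345} + a₂e^{367}` is not definite. -/
theorem stmt11 (a₁ a₂ a₃ : ℝ) :
    let φ : V7 [⋀^Fin 3]→ₗ[ℝ] ℝ :=
      (-(3 * a₁)) • (eW3 1 4 6 + eW3 1 5 7) + (-(3 * a₂)) • (eW3 1 4 7 - eW3 1 5 6)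
        + a₁ • eW3 2 4 5 - a₁ • eW3 2 6 7
        + a₃ • (eW3 2 4 7 - eW3 2 5 6) + a₃ • (eW3 3 4 6 + eW3 3 5 7)
        - a₂ • eW3 3 4 5 + a₂ • eW3 3 6 7
    ∃ v : V7, v ≠ 0 ∧ G2vol v φ = 0 := by
  intro φ
  have hd : φ = (-(3 * a₁)) • (eW3 1 4 6 + eW3 1 5 7) + (-(3 * a₂)) • (eW3 1 4 7 - eW3 1 5 6)
        + a₁ • eW3 2 4 5 - a₁ • eW3 2 6 7
        + a₃ • (eW3 2 4 7 - eW3 2 5 6) + a₃ • (eW3 3 4 6 + eW3 3 5 7)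
        - a₂ • eW3 3 4 5 + a₂ • eW3 3 6 7 := rfl
  by_cases h0 : a₁ = 0 ∧ a₂ = 0 ∧ a₃ = 0
  · refine ⟨bV 1, ?_, ?_⟩
    · intro h
      have h1 := congrFun h (open Fin.NatCast in ((1 - 1 : ℕ) : Fin 7))
      simp [bV] at h1
    · have hφ : φ = 0 := by
        obtain ⟨h1, h2, h3⟩ := h0
        rw [hd, h1, h2, h3]
        simp
      rw [show G2vol (bV 1) φ = wedge (wedge (iprod (bV 1) φ) (iprod (bV 1) φ)) φ from rfl,
        hφ, wedge_zero_right]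
  · set w : V7 := fun t => if t = 0 then a₃ else if t = 1 then 3*a₂ else if t = 2 then 3*a₁ else 0
      with hw
    refine ⟨w, ?_, ?_⟩
    · intro h
      apply h0
      have f0 : a₃ = 0 := by
        have t := congrFun h 0; rw [show w 0 = a₃ from rfl] at t; exact t
      have f1 : 3 * a₂ = 0 := by
        have t := congrFun h 1; rw [show w 1 = 3 * a₂ from rfl] at t; exact t
      have f2 : 3 * a₁ = 0 := by
        have t := congrFun h 2; rw [show w 2 = 3 * a₁ from rfl] at t; exact t
      exact ⟨by linarith, by linarith, f0⟩
    · have hι : iprod w φ = 0 := by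
        ext x
        rw [show iprod w φ x = φ (Matrix.vecCons w x) from rfl, hd]
        simp only [AlternatingMap.add_apply, AlternatingMap.sub_apply, AlternatingMap.smul_apply, AlternatingMap.zero_apply, eW3_apply]
        open Fin.NatCast in simp only [show ((1 - 1 : ℕ) : Fin 7) = 0 from rfl, show ((2 - 1 : ℕ) : Fin 7) = 1 from rfl,
          show ((3 - 1 : ℕ) : Fin 7) = 2 from rfl, show ((4 - 1 : ℕ) : Fin 7) = 3 from rfl,
          show ((5 - 1 : ℕ) : Fin 7) = 4 from rfl, show ((6 - 1 : ℕ) : Fin 7) = 5 from rfl,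
          show ((7 - 1 : ℕ) : Fin 7) = 6 from rfl]
        simp only [show Matrix.vecCons w x 0 = w from rfl,
          show Matrix.vecCons w x 1 = x 0 from rfl, show Matrix.vecCons w x 2 = x 1 from rfl]
        simp only [show w 0 = a₃ from rfl, show w 1 = 3*a₂ from rfl, show w 2 = 3*a₁ from rfl,
          show w 3 = 0 from rfl, show w 4 = 0 from rfl, show w 5 = 0 from rfl,
          show w 6 = 0 from rfl]
        simp only [smul_eq_mul]
        ring
      rw [show G2vol w φ = wedge (wedge (iprod w φ) (iprod w φ)) φ from rfl,
        hι, wedge_zero_left, wedge_zero_left]
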